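/- For every a > 0 there exists a unique b(a) ∈ (max(a,m), ∞) such that G(a, b(a)) = 0, and at this point ∂G/∂b(a, b(a)) < 0. -/

import Mathlib

open Real Set Filter Topology

noncomputable def G (r g lam α κ m θ₁ θ₂ a b : ℝ) : ℝ :=
  ((θ₁ - 1) * (b / a) ^ (1 - θ₂) + (1 - θ₂) * (b / a) ^ (1 - θ₁)) *
    (κ / (θ₁ - θ₂) - (if m ≤ b then α else 0) / ((θ₁ - θ₂) * (lam - (r - g))))
  + (α / ((θ₁ - θ₂) * (lam - (r - g)))) *
      ((1 - θ₂) * (m / a) ^ (1 - θ₁) + (θ₁ - 1) * (m / a) ^ (1 - θ₂)) *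
      (if a < m ∧ m < b then 1 else 0)
  + (α / (lam - (r - g))) * (if m ≤ a then 1 else 0)

noncomputable def Gf (θ₁ θ₂ x : ℝ) : ℝ :=
  (θ₁ - 1) * x ^ (1 - θ₂) + (1 - θ₂) * x ^ (1 - θ₁)

noncomputable def GH (r g lam α κ m θ₁ θ₂ a b : ℝ) : ℝ :=
  Gf θ₁ θ₂ (b / a) * (κ / (θ₁ - θ₂) - α / ((θ₁ - θ₂) * (lam - (r - g)))) +
    (if a < m then (α / ((θ₁ - θ₂) * (lam - (r - g)))) * Gf θ₁ θ₂ (m / a)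
     else α / (lam - (r - g)))

/-- for every a > 0 there exists a unique b(a) ∈ (max(a,m), ∞)
with G(a, b(a)) = 0, and at this point ∂G/∂b(a, b(a)) < 0. -/
theorem stmt_9 (σ r g lam α κ m θ₁ θ₂ a : ℝ) (hσ : 0 < σ)
    (hα : 0 < α) (hκ : 0 < κ) (hm : 0 < m) (ha : 0 < a)
    (hlam₁ : r - g < lam) (hlam₂ : lam < r - g + α / κ)
    (hθ₁ : θ₁ > 1) (hθ₂ : θ₂ < 0)
    (hroot₁ : (1/2) * σ ^ 2 * θ₁ * (θ₁ - 1) + (r - g) * θ₁ - lam = 0)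
    (hroot₂ : (1/2) * σ ^ 2 * θ₂ * (θ₂ - 1) + (r - g) * θ₂ - lam = 0) :
    ∃ b, max a m < b ∧ G r g lam α κ m θ₁ θ₂ a b = 0 ∧
      (∀ b', max a m < b' → G r g lam α κ m θ₁ θ₂ a b' = 0 → b' = b) ∧
      deriv (fun b' => G r g lam α κ m θ₁ θ₂ a b') b < 0 := by
  clear hσ hroot₁ hroot₂
  have hL0 : 0 < lam - (r - g) := by linarith
  have hθd : 0 < θ₁ - θ₂ := by linarith
  have h1θ : 0 < θ₁ - 1 := by linarith
  have h2θ : 0 < 1 - θ₂ := by linarith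
  have hκL : κ * (lam - (r - g)) < α := by
    have h := (lt_div_iff₀ hκ).1 (by linarith : lam - (r - g) < α / κ)
    linarith
  have hC0 : κ / (θ₁ - θ₂) - α / ((θ₁ - θ₂) * (lam - (r - g))) < 0 := by
    have heq : κ / (θ₁ - θ₂) - α / ((θ₁ - θ₂) * (lam - (r - g)))
        = (κ * (lam - (r - g)) - α) / ((θ₁ - θ₂) * (lam - (r - g))) := by
      field_simp
    rw [heq]
    exact div_neg_of_neg_of_pos (by linarith) (by positivity)
  -- G agrees with GH on (max a m, ∞)
  have hGHeq : ∀ b, max a m < b →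
      G r g lam α κ m θ₁ θ₂ a b = GH r g lam α κ m θ₁ θ₂ a b := by
    intro b hb
    have hmb : m < b := lt_of_le_of_lt (le_max_right a m) hb
    by_cases ham : a < m
    · simp only [G, GH, Gf, if_pos hmb.le, if_pos ham, if_pos (And.intro ham hmb),
        if_neg (not_le.2 ham)]
      ring
    · simp only [G, GH, Gf, if_pos hmb.le, if_neg ham, if_pos (not_lt.1 ham),
        if_neg (fun h : a < m ∧ m < b => ham h.1)]
      ring
  -- derivative of Gf
  have hGf' : ∀ x : ℝ, 0 < x → HasDerivAt (fun x => Gf θ₁ θ₂ x)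
      ((θ₁ - 1) * ((1 - θ₂) * x ^ (-θ₂)) + (1 - θ₂) * ((1 - θ₁) * x ^ (-θ₁))) x := by
    intro x hx
    have h1 : HasDerivAt (fun x : ℝ => x ^ (1 - θ₂)) ((1 - θ₂) * x ^ (1 - θ₂ - 1)) x :=
      Real.hasDerivAt_rpow_const (Or.inl hx.ne')
    have h2 : HasDerivAt (fun x : ℝ => x ^ (1 - θ₁)) ((1 - θ₁) * x ^ (1 - θ₁ - 1)) x :=
      Real.hasDerivAt_rpow_const (Or.inl hx.ne')
    rw [show (1 : ℝ) - θ₂ - 1 = -θ₂ by ring] at h1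
    rw [show (1 : ℝ) - θ₁ - 1 = -θ₁ by ring] at h2
    exact (h1.const_mul (θ₁ - 1)).add (h2.const_mul (1 - θ₂))
  -- derivative of GH
  have hGH' : ∀ b : ℝ, 0 < b → HasDerivAt (fun b' => GH r g lam α κ m θ₁ θ₂ a b')
      (((θ₁ - 1) * ((1 - θ₂) * (b / a) ^ (-θ₂)) + (1 - θ₂) * ((1 - θ₁) * (b / a) ^ (-θ₁)))
        * (1 / a) * (κ / (θ₁ - θ₂) - α / ((θ₁ - θ₂) * (lam - (r - g))))) b := by
    intro b hb
    have hba : 0 < b / a := div_pos hb ha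
    have hdiv : HasDerivAt (fun b : ℝ => b / a) (1 / a) b := by
      simpa using (hasDerivAt_id b).div_const a
    have hcomp := (hGf' (b / a) hba).comp b hdiv
    exact (hcomp.mul_const _).add_const _
  -- the derivative value is negative on (max a m, ∞)
  have hval : ∀ b, max a m < b →
      (((θ₁ - 1) * ((1 - θ₂) * (b / a) ^ (-θ₂)) + (1 - θ₂) * ((1 - θ₁) * (b / a) ^ (-θ₁)))
        * (1 / a) * (κ / (θ₁ - θ₂) - α / ((θ₁ - θ₂) * (lam - (r - g))))) < 0 := by
    intro b hb
    have hab : a < b := lt_of_le_of_lt (le_max_left a m) hb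
    have hx : 1 < b / a := (one_lt_div ha).2 hab
    have hXY : (b / a) ^ (-θ₁) < (b / a) ^ (-θ₂) :=
      (Real.rpow_lt_rpow_left_iff hx).2 (by linarith)
    have hpos : 0 < ((θ₁ - 1) * ((1 - θ₂) * (b / a) ^ (-θ₂))
        + (1 - θ₂) * ((1 - θ₁) * (b / a) ^ (-θ₁))) * (1 / a) := by
      have key : 0 < (θ₁ - 1) * (1 - θ₂) * ((b / a) ^ (-θ₂) - (b / a) ^ (-θ₁)) :=
        mul_pos (mul_pos h1θ h2θ) (sub_pos.2 hXY)
      have ha' : 0 < 1 / a := by positivity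
      nlinarith [mul_pos key ha']
    exact mul_neg_of_pos_of_neg hpos hC0
  have haM : 0 < max a m := lt_of_lt_of_le ha (le_max_left a m)
  have hcont : ContinuousOn (fun b' => GH r g lam α κ m θ₁ θ₂ a b') (Ici (max a m)) :=
    fun b hb => ((hGH' b (lt_of_lt_of_le haM hb)).continuousAt).continuousWithinAt
  have hanti : StrictAntiOn (fun b' => GH r g lam α κ m θ₁ θ₂ a b') (Ici (max a m)) := by
    apply strictAntiOn_of_deriv_neg (convex_Ici _) hcont
    intro b hb
    rw [interior_Ici] at hb
    rw [(hGH' b (lt_trans haM hb)).deriv]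
    exact hval b hb
  -- positive value at max a m
  have hMpos : 0 < GH r g lam α κ m θ₁ θ₂ a (max a m) := by
    by_cases ham : a < m
    · rw [max_eq_right ham.le]
      have hma : 0 < m / a := by positivity
      have hGfpos : 0 < Gf θ₁ θ₂ (m / a) := by
        have hp1 := Real.rpow_pos_of_pos hma (1 - θ₂)
        have hp2 := Real.rpow_pos_of_pos hma (1 - θ₁)
        unfold Gf; positivity
      have hcalc : GH r g lam α κ m θ₁ θ₂ a m = Gf θ₁ θ₂ (m / a) * (κ / (θ₁ - θ₂)) := by
        simp only [GH, if_pos ham]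
        ring
      rw [hcalc]
      positivity
    · rw [max_eq_left (not_lt.1 ham)]
      have hcalc : GH r g lam α κ m θ₁ θ₂ a a = κ := by
        simp only [GH, Gf, if_neg ham]
        rw [div_self ha.ne', Real.one_rpow, Real.one_rpow]
        field_simp
        ring
      rw [hcalc]; exact hκ
  -- GH tends to -∞
  have hdivT : Tendsto (fun b : ℝ => b / a) atTop atTop :=
    tendsto_id.atTop_div_const ha
  have h1T : Tendsto (fun x : ℝ => (θ₁ - 1) * x ^ (1 - θ₂)) atTop atTop :=
    (tendsto_rpow_atTop h2θ).const_mul_atTop h1θ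
  have h2T : Tendsto (fun x : ℝ => (1 - θ₂) * x ^ (1 - θ₁)) atTop (𝓝 ((1 - θ₂) * 0)) := by
    have h := tendsto_rpow_neg_atTop h1θ
    rw [show -(θ₁ - 1) = 1 - θ₁ by ring] at h
    exact h.const_mul _
  have hfT : Tendsto (fun x => Gf θ₁ θ₂ x) atTop atTop := by
    simp only [Gf]
    exact h1T.atTop_add h2T
  have hHT : Tendsto (fun b => GH r g lam α κ m θ₁ θ₂ a b) atTop atBot := by
    have hc := (hfT.comp hdivT).atTop_mul_const_of_neg hC0
    exact tendsto_atBot_add_const_right atTop _ hc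
  obtain ⟨T, hTneg, hTM⟩ :=
    ((hHT.eventually (eventually_lt_atBot 0)).and (eventually_gt_atTop (max a m))).exists
  -- intermediate value
  obtain ⟨b, hbmem, hHb⟩ :=
    intermediate_value_Ioo' hTM.le (hcont.mono Icc_subset_Ici_self)
      (Set.mem_Ioo.2 ⟨hTneg, hMpos⟩)
  refine ⟨b, hbmem.1, (hGHeq b hbmem.1).trans hHb, ?_, ?_⟩
  · intro b' hb' hGb'
    have hHb' : GH r g lam α κ m θ₁ θ₂ a b' = 0 := (hGHeq b' hb').symm.trans hGb'
    exact hanti.injOn hb'.le hbmem.1.le (hHb'.trans hHb.symm)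
  · have hb0 : 0 < b := lt_trans haM hbmem.1
    have heq : (fun b' => G r g lam α κ m θ₁ θ₂ a b')
        =ᶠ[nhds b] (fun b' => GH r g lam α κ m θ₁ θ₂ a b') :=
      eventually_of_mem (Ioi_mem_nhds hbmem.1) (fun x hx => hGHeq x hx)
    rw [heq.deriv_eq, (hGH' b hb0).deriv]
    exact hval b hbmem.1
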